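/- arXiv:2311.00684 — 2 statements merged into one kernel-verified Lean document; each statement's English description precedes it below -/
import Mathlib

section
/- For a logit vector l ∈ ℝ^L with a unique maximum entry, the maximum softmax probability max_i softmax_τ(l)_i is a strictly decreasing function of the temperature τ on (0, ∞). -/
open Real Finset

noncomputable def softmax (L : ℕ) (τ : ℝ) (l : Fin L → ℝ) (i : Fin L) : ℝ :=
  Real.exp (l i / τ) / ∑ j, Real.exp (l j / τ)

theorem softmax_max_strictAnti_in_temp (L : ℕ) (hL : 2 ≤ L) (l : Fin L → ℝ)
    (m : Fin L) (hm : ∀ j, j ≠ m → l j < l m)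
    (hne : (Finset.univ : Finset (Fin L)).Nonempty) :
    StrictAntiOn (fun τ => Finset.univ.sup' hne (fun i => softmax L τ l i))
      (Set.Ioi (0 : ℝ)) := by
  set g : ℝ → ℝ := fun τ => ∑ j, Real.exp ((l j - l m) / τ) with hg
  have hgpos : ∀ τ : ℝ, 0 < g τ := fun τ =>
    Finset.sum_pos (fun j _ => Real.exp_pos _) hne
  have hmax : ∀ τ : ℝ, 0 < τ → softmax L τ l m = (g τ)⁻¹ := by
    intro τ hτ
    have hsum : (∑ j, Real.exp (l j / τ)) = Real.exp (l m / τ) * g τ := by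
      rw [hg, Finset.mul_sum]
      refine Finset.sum_congr rfl fun j _ => ?_
      rw [← Real.exp_add]
      congr 1
      field_simp
      ring
    rw [softmax, hsum, div_mul_eq_div_div, div_self (Real.exp_ne_zero _), one_div]
  have hsup : ∀ τ : ℝ, 0 < τ →
      Finset.univ.sup' hne (fun i => softmax L τ l i) = softmax L τ l m := by
    intro τ hτ
    apply le_antisymm
    · apply Finset.sup'_le
      intro j _
      have hS : 0 < ∑ k, Real.exp (l k / τ) :=
        Finset.sum_pos (fun k _ => Real.exp_pos _) hne
      unfold softmax
      gcongr
      have hle : l j ≤ l m := by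
        rcases eq_or_ne j m with h | h
        · subst h; exact le_refl _
        · exact (hm j h).le
      exact hle -- (by
        
    · exact Finset.le_sup' _ (Finset.mem_univ m)
  intro τ₁ hτ₁ τ₂ hτ₂ h12
  simp only [Set.mem_Ioi] at hτ₁ hτ₂
  simp only []
  rw [hsup τ₁ hτ₁, hsup τ₂ hτ₂, hmax τ₁ hτ₁, hmax τ₂ hτ₂]
  apply inv_strictAnti₀ (hgpos τ₁)
  -- g τ₁ < g τ₂
  have : Nontrivial (Fin L) := Fin.nontrivial_iff_two_le.mpr hL
  obtain ⟨j₀, hj₀⟩ := exists_ne m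
  refine Finset.sum_lt_sum (fun j _ => ?_) ⟨j₀, Finset.mem_univ _, ?_⟩
  · apply Real.exp_le_exp.mpr
    rcases eq_or_ne j m with h | h
    · simp [h]
    · have hneg : l j - l m ≤ 0 := by linarith [hm j h]
      rw [div_eq_mul_inv, div_eq_mul_inv]
      exact mul_le_mul_of_nonpos_left (by
        exact inv_anti₀ hτ₁ h12.le) hneg
  · apply Real.exp_lt_exp.mpr
    have hneg : l j₀ - l m < 0 := by linarith [hm j₀ hj₀]
    rw [div_eq_mul_inv, div_eq_mul_inv]
    exact mul_lt_mul_of_neg_left (inv_strictAnti₀ hτ₁ h12) hneg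
end

section
/- Suppose the Shannon entropy at temperature τ is approximated by the map H(L, σ, τ) = log L − σ²/(2τ²). Given L_tr, L_ex with L_ex ≥ L_tr > 0 and σ_tr, σ_ex > 0, the unique positive temperature τ solving H(L_ex, σ_ex, τ) = H(L_tr, σ_tr, 1) is τ = σ_ex / √(σ_tr² + 2·log(L_ex/L_tr)). -/
open Real

theorem entropy_alignment_temperature (Ltr Lex σtr σex : ℝ)
    (hLtr : 0 < Ltr) (hLL : Ltr ≤ Lex) (hσtr : 0 < σtr) (hσex : 0 < σex)
    (hpos : 0 < σtr ^ 2 + 2 * Real.log (Lex / Ltr)) :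
    let H : ℝ → ℝ → ℝ → ℝ := fun L σ τ => Real.log L - σ ^ 2 / (2 * τ ^ 2)
    let τ := σex / Real.sqrt (σtr ^ 2 + 2 * Real.log (Lex / Ltr))
    0 < τ ∧ H Lex σex τ = H Ltr σtr 1 ∧
      ∀ τ' > (0 : ℝ), H Lex σex τ' = H Ltr σtr 1 → τ' = τ := by
  intro H τ
  set D := σtr ^ 2 + 2 * Real.log (Lex / Ltr) with hD
  have hLex : 0 < Lex := lt_of_lt_of_le hLtr hLL
  have hsq : Real.sqrt D > 0 := Real.sqrt_pos.mpr hpos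
  have hτpos : 0 < τ := div_pos hσex hsq
  have hτ2 : τ ^ 2 = σex ^ 2 / D := by
    simp only [τ, div_pow, Real.sq_sqrt hpos.le]
    rw [← hD, Real.sq_sqrt hpos.le]
  have hlog : Real.log (Lex / Ltr) = Real.log Lex - Real.log Ltr :=
    Real.log_div (ne_of_gt hLex) (ne_of_gt hLtr)
  rw [hlog] at hD
  have key : H Lex σex τ = H Ltr σtr 1 := by
    simp only [H, hτ2]
    have hσex2 : σex ^ 2 ≠ 0 := by positivity
    field_simp
    linear_combination (-2 * σex ^ 2) * hD + (4 * σex ^ 2 - 2) * hlog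
  refine ⟨hτpos, key, ?_⟩
  intro τ' hτ' heq
  have h2 : σex ^ 2 / (2 * τ' ^ 2) = σex ^ 2 / (2 * τ ^ 2) := by
    simp only [H] at heq key
    linarith
  have h3 := (div_eq_div_iff (by positivity) (by positivity)).mp h2
  have hσex2 : σex ^ 2 ≠ 0 := by positivity
  have hne : τ' ^ 2 = τ ^ 2 :=
    (mul_left_cancel₀ hσex2 (by linear_combination h3 / 2)).symm
  have hz : (τ' - τ) * (τ' + τ) = 0 := by linear_combination hne
  rcases mul_eq_zero.mp hz with h | h
  · linarith
  · linarith
end
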